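/- Let ν > 0. For f holomorphic on the upper half-plane, if f ∈ A¹_ν(ℂ₊), i.e. ∫_{ℂ₊}|f(x+iy)| y^{ν−1} dx dy < ∞, then f ∈ H¹_ν, i.e. sup_{y>0} y^ν ∫_ℝ |f(x+iy)| dx < ∞, and ‖f‖_{H¹_ν} ≤ C‖f‖_{A¹_ν} for a constant C depending only on ν. -/

import Mathlib

open MeasureTheory Complex Metric Set Function
open scoped ENNReal


lemma circle_submean {f : ℂ → ℂ} {c : ℂ} {ρ : ℝ} (hρ : 0 < ρ)
    (hd : DifferentiableOn ℂ f (closedBall c ρ)) :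
    2 * Real.pi * ‖f c‖ ≤ ∫ θ in (0:ℝ)..(2*Real.pi), ‖f (circleMap c ρ θ)‖ := by
  have h := hd.circleIntegral_sub_inv_smul (mem_ball_self hρ)
  have h1 : ‖(2 * (Real.pi:ℂ) * I) • f c‖ = 2 * Real.pi * ‖f c‖ := by
    simp [norm_smul, Complex.norm_two, abs_of_pos Real.pi_pos]
  calc 2 * Real.pi * ‖f c‖ = ‖∮ ζ in C(c, ρ), (ζ - c)⁻¹ • f ζ‖ := by rw [h, h1]
    _ ≤ ∫ θ in (0:ℝ)..(2*Real.pi),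
        ‖deriv (circleMap c ρ) θ • ((circleMap c ρ θ - c)⁻¹ • f (circleMap c ρ θ))‖ := by
        rw [circleIntegral]
        exact intervalIntegral.norm_integral_le_integral_norm Real.two_pi_pos.le
    _ = ∫ θ in (0:ℝ)..(2*Real.pi), ‖f (circleMap c ρ θ)‖ := by
        apply intervalIntegral.integral_congr
        intro θ _
        simp [norm_smul, deriv_circleMap, circleMap_sub_center, abs_of_pos hρ]
        field_simp

lemma disc_submean {f : ℂ → ℂ} {c : ℂ} {r : ℝ} (hr : 0 < r)
    (hd : DifferentiableOn ℂ f (closedBall c r)) :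
    Real.pi * r^2 * ‖f c‖ ≤ ∫ w in ball c r, ‖f w‖ := by
  set g : ℂ → ℝ := fun w => ‖f (c + w)‖ with hg
  have gcont : ContinuousOn g (closedBall 0 r) := by
    apply (hd.continuousOn.comp (by fun_prop) ?_).norm
    intro w hw
    simpa [dist_eq_norm] using hw
  -- translation
  have htrans : ∫ w in ball c r, ‖f w‖ = ∫ w, (ball (0:ℂ) r).indicator g w := by
    rw [← integral_indicator measurableSet_ball,
      ← integral_add_left_eq_self (fun w => (ball c r).indicator (fun w => ‖f w‖) w) c]
    congr 1
    funext w
    by_cases hw : w ∈ ball (0:ℂ) r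
    · rw [Set.indicator_of_mem hw, Set.indicator_of_mem (by simpa [mem_ball, dist_eq_norm] using hw)]
    · rw [Set.indicator_of_notMem hw, Set.indicator_of_notMem (by simpa [mem_ball, dist_eq_norm] using hw)]
  -- polar coordinates
  have hpolar := Complex.integral_comp_polarCoord_symm ((ball (0:ℂ) r).indicator g)
  rw [htrans, ← hpolar]
  -- restrict to the rectangle
  have hrect : ∫ p in polarCoord.target, p.1 • (ball (0:ℂ) r).indicator g (Complex.polarCoord.symm p)
      = ∫ p in Ioo (0:ℝ) r ×ˢ Ioo (-Real.pi) Real.pi, p.1 * g (Complex.polarCoord.symm p) := by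
    have hset : Ioo (0:ℝ) r ×ˢ Ioo (-Real.pi) Real.pi
        = polarCoord.target ∩ Ioo (0:ℝ) r ×ˢ Ioo (-Real.pi) Real.pi := by
      rw [polarCoord_target]
      ext p
      simp only [mem_inter_iff, mem_prod, mem_Ioo, mem_Ioi]
      tauto
    conv_rhs => rw [hset]
    rw [← setIntegral_indicator (measurableSet_Ioo.prod measurableSet_Ioo)]
    apply setIntegral_congr_fun polarCoord.open_target.measurableSet
    intro p hp
    rw [polarCoord_target] at hp
    obtain ⟨hp1, hp2⟩ := hp
    simp only [mem_Ioi] at hp1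
    have habs : ‖Complex.polarCoord.symm p‖ = p.1 := by
      rw [Complex.norm_polarCoord_symm, abs_of_pos hp1]
    simp only [mem_Ioo] at hp2
    show p.1 • (ball (0:ℂ) r).indicator g (Complex.polarCoord.symm p) = _
    by_cases h1 : p.1 < r
    · rw [Set.indicator_of_mem (show Complex.polarCoord.symm p ∈ ball (0:ℂ) r by
          rw [mem_ball, dist_zero_right, habs]; exact h1),
        Set.indicator_of_mem (show p ∈ Ioo (0:ℝ) r ×ˢ Ioo (-Real.pi) Real.pi from ⟨⟨hp1, h1⟩, hp2⟩)]
      simp [smul_eq_mul]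
    · rw [Set.indicator_of_notMem (show Complex.polarCoord.symm p ∉ ball (0:ℂ) r by
          rw [mem_ball, dist_zero_right, habs]; exact h1),
        Set.indicator_of_notMem (show p ∉ Ioo (0:ℝ) r ×ˢ Ioo (-Real.pi) Real.pi by
          simp only [mem_prod, mem_Ioo]; tauto)]
      simp
  rw [hrect]
  set Φ : ℝ × ℝ → ℝ := fun p => p.1 * g (Complex.polarCoord.symm p) with hΦ
  have hsymm_cont : Continuous (fun p : ℝ × ℝ => (Complex.polarCoord.symm p : ℂ)) := by
    have : (fun p : ℝ × ℝ => (Complex.polarCoord.symm p : ℂ))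
        = fun p : ℝ × ℝ => (p.1 : ℂ) * (Real.cos p.2 + Real.sin p.2 * I) := by
      funext p; rw [Complex.polarCoord_symm_apply]
    rw [this]; fun_prop
  have hΦc : ContinuousOn Φ (Icc 0 r ×ˢ Icc (-Real.pi) Real.pi) := by
    apply continuousOn_fst.mul
    apply gcont.comp hsymm_cont.continuousOn
    intro p hp
    simp only [mem_closedBall, dist_zero_right,
      Complex.norm_polarCoord_symm]
    rcases hp with ⟨h1, _⟩
    rw [_root_.abs_of_nonneg h1.1]
    exact h1.2
  have hΦi : IntegrableOn Φ (Ioo 0 r ×ˢ Ioo (-Real.pi) Real.pi) := by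
    exact (hΦc.integrableOn_compact (isCompact_Icc.prod isCompact_Icc)).mono_set
      (prod_mono Ioo_subset_Icc_self Ioo_subset_Icc_self)
  rw [Measure.volume_eq_prod] at hΦi ⊢
  rw [setIntegral_prod _ hΦi]
  have hval : ∫ ρ in Ioo (0:ℝ) r, 2 * Real.pi * ‖f c‖ * ρ = Real.pi * r^2 * ‖f c‖ := by
    rw [← MeasureTheory.integral_Ioc_eq_integral_Ioo,
      ← intervalIntegral.integral_of_le hr.le, intervalIntegral.integral_const_mul,
      integral_id]
    ring
  rw [← hval]
  apply setIntegral_mono_on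
  · exact (((continuous_const.mul continuous_id).continuousOn.integrableOn_compact
      isCompact_Icc).mono_set Ioo_subset_Icc_self : IntegrableOn _ (Ioo (0:ℝ) r))
  · have h2 : Integrable Φ ((volume.restrict (Ioo (0:ℝ) r)).prod
        (volume.restrict (Ioo (-Real.pi) Real.pi))) := by
      rw [Measure.prod_restrict]; exact hΦi
    exact h2.integral_prod_left
  · exact measurableSet_Ioo
  · intro ρ hρ
    rcases hρ with ⟨hρ0, hρr⟩
    have hcirc : ∀ θ : ℝ, g (Complex.polarCoord.symm (ρ, θ)) = ‖f (circleMap c ρ θ)‖ := by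
      intro θ
      have : c + (Complex.polarCoord.symm (ρ, θ) : ℂ) = circleMap c ρ θ := by
        rw [Complex.polarCoord_symm_apply, circleMap]
        simp [Complex.exp_mul_I]
      simp only [hg, this]
    have hper : Function.Periodic (fun θ => ‖f (circleMap c ρ θ)‖) (2*Real.pi) := by
      intro θ
      simp [periodic_circleMap c ρ θ]
    have h1 : ∫ θ in Ioo (-Real.pi) Real.pi, Φ (ρ, θ)
        = ρ * ∫ θ in (0:ℝ)..(2*Real.pi), ‖f (circleMap c ρ θ)‖ := by
      simp only [hΦ, hcirc]
      rw [MeasureTheory.integral_const_mul, ← MeasureTheory.integral_Ioc_eq_integral_Ioo,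
        ← intervalIntegral.integral_of_le (by linarith [Real.pi_pos] : -Real.pi ≤ Real.pi)]
      congr 1
      have := hper.intervalIntegral_add_eq (-Real.pi) 0
      simpa [zero_add, (by ring : -Real.pi + 2*Real.pi = Real.pi)] using this
    rw [h1]
    have hsub : closedBall c ρ ⊆ closedBall c r := closedBall_subset_closedBall hρr.le
    have := circle_submean hρ0 (hd.mono hsub)
    calc 2 * Real.pi * ‖f c‖ * ρ ≤ (∫ θ in (0:ℝ)..(2*Real.pi), ‖f (circleMap c ρ θ)‖) * ρ :=
        mul_le_mul_of_nonneg_right this hρ0.le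
      _ = ρ * ∫ θ in (0:ℝ)..(2*Real.pi), ‖f (circleMap c ρ θ)‖ := mul_comm _ _

lemma weight_bound {ν y t : ℝ} (hy : 0 < y) (h1 : y/2 ≤ t) (h2 : t ≤ 2*y) :
    y ^ (ν - 1) ≤ 2 ^ |ν - 1| * t ^ (ν - 1) := by
  have ht : 0 < t := lt_of_lt_of_le (by linarith) h1
  rcases le_or_gt 1 ν with h | h
  · have e1 : y ^ (ν-1) = 2^(ν-1) * (y/2)^(ν-1) := by
      rw [← Real.mul_rpow (by norm_num) (by positivity)]; congr 1; ring
    rw [e1, _root_.abs_of_nonneg (by linarith : (0:ℝ) ≤ ν - 1)]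
    exact mul_le_mul_of_nonneg_left
      (Real.rpow_le_rpow (by positivity) h1 (by linarith)) (by positivity)
  · have h2y : (2*y)^(ν-1) ≤ t^(ν-1) := Real.rpow_le_rpow_of_nonpos ht h2 (by linarith)
    have e1 : (2:ℝ)^(1-ν) * (2*y)^(ν-1) = y^(ν-1) := by
      rw [Real.mul_rpow (by norm_num) hy.le, ← mul_assoc,
        ← Real.rpow_add (by norm_num : (0:ℝ) < 2)]
      norm_num
    rw [_root_.abs_of_nonpos (by linarith : ν - 1 ≤ 0), neg_sub]
    calc y^(ν-1) = 2^(1-ν) * (2*y)^(ν-1) := e1.symm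
      _ ≤ 2^(1-ν) * t^(ν-1) := mul_le_mul_of_nonneg_left h2y (by positivity)

/-- Embedding `A¹_ν(ℂ₊) ⊂ H¹_ν(ℂ₊)`: for holomorphic `f` with finite weighted
Bergman norm, `y^ν ∫_ℝ |f(x+iy)| dx ≤ C ‖f‖_{A¹_ν}` for all `y > 0`. -/
theorem bergman_embeds_in_hardy (ν : ℝ) (hν : 0 < ν) :
    ∃ C : ℝ, 0 < C ∧ ∀ f : ℂ → ℂ,
      DifferentiableOn ℂ f {z : ℂ | 0 < z.im} →
      IntegrableOn (fun w : ℂ => ‖f w‖ * w.im ^ (ν - 1)) {z : ℂ | 0 < z.im} →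
      ∀ y : ℝ, 0 < y →
        y ^ ν * (∫ x : ℝ, ‖f (x + y * I)‖) ≤
          C * ∫ w in {z : ℂ | 0 < z.im}, ‖f w‖ * w.im ^ (ν - 1) := by
  set c2 : ℝ := 2 ^ |ν - 1| with hc2def
  have hc2 : 0 < c2 := Real.rpow_pos_of_pos two_pos _
  refine ⟨4 * c2 / Real.pi, by positivity, ?_⟩
  intro f hf hint y hy
  set U : Set ℂ := {z : ℂ | 0 < z.im} with hUdef
  have hU : IsOpen U := isOpen_lt continuous_const Complex.continuous_im
  set r : ℝ := y / 2 with hrdef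
  have hr : 0 < r := by positivity
  set G : ℂ → ℝ≥0∞ := fun w => U.indicator (fun w => ENNReal.ofReal ‖f w‖) w with hG
  have hfc : ContinuousOn f U := hf.continuousOn
  have hGm : AEMeasurable G := by
    rw [hG, aemeasurable_indicator_iff hU.measurableSet]
    exact ENNReal.measurable_ofReal.comp_aemeasurable
      (hfc.norm.aemeasurable hU.measurableSet)
  have hball : ∀ x : ℝ, closedBall ((x:ℂ) + y*I) r ⊆ U := by
    intro x w hw
    have h1 : |(w - ((x:ℂ) + y*I)).im| ≤ ‖w - ((x:ℂ)+y*I)‖ :=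
      Complex.abs_im_le_norm _
    rw [mem_closedBall, Complex.dist_eq] at hw
    have h2 : (w - ((x:ℂ) + y*I)).im = w.im - y := by simp
    rw [h2] at h1
    have := (abs_le.mp (h1.trans hw)).1
    show 0 < w.im
    rw [hrdef] at this
    linarith
  -- pointwise disc bound
  have hptwise : ∀ x : ℝ, ENNReal.ofReal (Real.pi * r^2) * ENNReal.ofReal ‖f ((x:ℂ) + y*I)‖
      ≤ ∫⁻ w, (ball ((x:ℂ)+y*I) r).indicator G w := by
    intro x
    set cx : ℂ := (x:ℂ) + y*I with hcx
    have hdisc := disc_submean hr (hf.mono (hball x))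
    have hcont : ContinuousOn (fun w => ‖f w‖) (closedBall cx r) := (hfc.mono (hball x)).norm
    have hInt : IntegrableOn (fun w => ‖f w‖) (ball cx r) :=
      (hcont.integrableOn_compact (isCompact_closedBall _ _)).mono_set ball_subset_closedBall
    have h1 : ENNReal.ofReal (∫ w in ball cx r, ‖f w‖)
        = ∫⁻ w in ball cx r, ENNReal.ofReal ‖f w‖ :=
      ofReal_integral_eq_lintegral_ofReal hInt (ae_of_all _ fun w => norm_nonneg _)
    have h2 : ∫⁻ w in ball cx r, ENNReal.ofReal ‖f w‖ = ∫⁻ w in ball cx r, G w := by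
      apply setLIntegral_congr_fun measurableSet_ball
      intro w hw
      exact (Set.indicator_of_mem (hball x (ball_subset_closedBall hw)) (fun w => ENNReal.ofReal ‖f w‖)).symm
    rw [← ENNReal.ofReal_mul (by positivity : (0:ℝ) ≤ Real.pi * r^2)]
    calc ENNReal.ofReal (Real.pi * r^2 * ‖f cx‖)
        ≤ ENNReal.ofReal (∫ w in ball cx r, ‖f w‖) := ENNReal.ofReal_le_ofReal hdisc
      _ = ∫⁻ w in ball cx r, G w := by rw [h1, h2]
      _ = ∫⁻ w, (ball cx r).indicator G w := (lintegral_indicator measurableSet_ball G).symm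
  set M : ℝ≥0∞ := ∫⁻ x : ℝ, ENNReal.ofReal ‖f ((x:ℂ)+y*I)‖ with hMdef
  have hM1 : ENNReal.ofReal (Real.pi * r^2) * M
      ≤ ∫⁻ x : ℝ, ∫⁻ w, (ball ((x:ℂ)+y*I) r).indicator G w := by
    rw [hMdef, ← lintegral_const_mul' _ _ ENNReal.ofReal_ne_top]
    exact lintegral_mono hptwise
  have hswap : (∫⁻ x : ℝ, ∫⁻ w, (ball ((x:ℂ)+y*I) r).indicator G w)
      = ∫⁻ w, ∫⁻ x : ℝ, (ball ((x:ℂ)+y*I) r).indicator G w := by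
    apply lintegral_lintegral_swap
    have hS : IsOpen {p : ℝ × ℂ | dist p.2 ((p.1:ℂ) + y*I) < r} := by
      apply isOpen_lt _ continuous_const
      fun_prop
    have hGsnd : AEMeasurable (fun p : ℝ × ℂ => G p.2) (volume.prod volume) :=
      hGm.comp_quasiMeasurePreserving Measure.quasiMeasurePreserving_snd
    have heq : (uncurry fun (x:ℝ) (w:ℂ) => (ball ((x:ℂ)+y*I) r).indicator G w)
        = {p : ℝ × ℂ | dist p.2 ((p.1:ℂ)+y*I) < r}.indicator (fun p => G p.2) := by
      funext p
      rcases p with ⟨x, w⟩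
      classical
      simp only [uncurry]
      rw [Set.indicator_apply, Set.indicator_apply]
      simp only [mem_ball, mem_setOf_eq]
    rw [heq]
    exact hGsnd.indicator hS.measurableSet
  set T : Set ℂ := {w : ℂ | |w.im - y| < r} with hT
  have hTopen : IsOpen T := by
    apply isOpen_lt _ continuous_const
    fun_prop
  have hinner : ∀ w : ℂ, (∫⁻ x : ℝ, (ball ((x:ℂ)+y*I) r).indicator G w)
      ≤ G w * (ENNReal.ofReal (2*r) * T.indicator 1 w) := by
    intro w
    classical
    have hEopen : IsOpen {x : ℝ | dist w ((x:ℂ)+y*I) < r} := by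
      apply isOpen_lt _ continuous_const
      fun_prop
    have hEw : (fun x : ℝ => (ball ((x:ℂ)+y*I) r).indicator G w)
        = fun x : ℝ => {x : ℝ | dist w ((x:ℂ)+y*I) < r}.indicator (fun _ => G w) x := by
      funext x
      rw [Set.indicator_apply, Set.indicator_apply]
      simp only [mem_ball, mem_setOf_eq]
    rw [hEw, lintegral_indicator hEopen.measurableSet, setLIntegral_const]
    have habsim : ∀ x : ℝ, |w.im - y| ≤ dist w ((x:ℂ)+y*I) := by
      intro x
      have h1 : |(w - ((x:ℂ) + y*I)).im| ≤ ‖w - ((x:ℂ)+y*I)‖ :=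
        Complex.abs_im_le_norm _
      rw [Complex.dist_eq]
      simpa using h1
    by_cases hwT : w ∈ T
    · have hsub : {x : ℝ | dist w ((x:ℂ)+y*I) < r} ⊆ Ioo (w.re - r) (w.re + r) := by
        intro x hx
        simp only [mem_setOf_eq] at hx
        have h1 : |(w - ((x:ℂ) + y*I)).re| ≤ ‖w - ((x:ℂ)+y*I)‖ :=
          Complex.abs_re_le_norm _
        rw [Complex.dist_eq] at hx
        have h2 : (w - ((x:ℂ) + y*I)).re = w.re - x := by simp
        rw [h2] at h1
        have := abs_lt.mp (h1.trans_lt hx)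
        constructor <;> [linarith [this.2]; linarith [this.1]]
      have hvol : volume {x : ℝ | dist w ((x:ℂ)+y*I) < r} ≤ ENNReal.ofReal (2*r) := by
        calc volume {x : ℝ | dist w ((x:ℂ)+y*I) < r} ≤ volume (Ioo (w.re - r) (w.re + r)) :=
            measure_mono hsub
          _ = ENNReal.ofReal (2*r) := by rw [Real.volume_Ioo]; congr 1; ring
      rw [Set.indicator_of_mem hwT]
      simpa using mul_le_mul_right hvol (G w)
    · have hempty : {x : ℝ | dist w ((x:ℂ)+y*I) < r} = ∅ := by
        ext x
        simp only [mem_setOf_eq, mem_empty_iff_false, iff_false, not_lt]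
        have h2 : r ≤ |w.im - y| := by
          by_contra h3
          exact hwT (by simpa [hT] using not_le.mp h3)
        exact h2.trans (habsim x)
      rw [hempty]
      simp
  have hM2 : (∫⁻ w, ∫⁻ x : ℝ, (ball ((x:ℂ)+y*I) r).indicator G w)
      ≤ ENNReal.ofReal (2*r) * ∫⁻ w in T, G w := by
    classical
    calc (∫⁻ w, ∫⁻ x : ℝ, (ball ((x:ℂ)+y*I) r).indicator G w)
        ≤ ∫⁻ w, G w * (ENNReal.ofReal (2*r) * T.indicator 1 w) := lintegral_mono hinner
      _ = ∫⁻ w, T.indicator (fun w => ENNReal.ofReal (2*r) * G w) w := by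
          apply lintegral_congr
          intro w
          rw [Set.indicator_apply, Set.indicator_apply]
          by_cases hw : w ∈ T <;> simp [hw, mul_comm]
      _ = ∫⁻ w in T, ENNReal.ofReal (2*r) * G w := lintegral_indicator hTopen.measurableSet _
      _ = ENNReal.ofReal (2*r) * ∫⁻ w in T, G w :=
          lintegral_const_mul' _ _ ENNReal.ofReal_ne_top
  have hTsubU : T ⊆ U := by
    intro w hw
    simp only [hT, mem_setOf_eq] at hw
    have := (abs_lt.mp hw).1
    show 0 < w.im
    rw [hrdef] at this
    linarith
  have hweight : ENNReal.ofReal (y ^ (ν-1)) * ∫⁻ w in T, G w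
      ≤ ENNReal.ofReal c2 * ∫⁻ w in U, ENNReal.ofReal (‖f w‖ * w.im ^ (ν-1)) := by
    rw [← lintegral_const_mul' _ _ ENNReal.ofReal_ne_top,
      ← lintegral_const_mul' _ _ ENNReal.ofReal_ne_top]
    calc (∫⁻ w in T, ENNReal.ofReal (y^(ν-1)) * G w)
        ≤ ∫⁻ w in T, ENNReal.ofReal (c2 * w.im^(ν-1)) * G w := by
          apply lintegral_mono_ae
          filter_upwards [ae_restrict_mem hTopen.measurableSet] with w hw
          apply mul_le_mul_left
          apply ENNReal.ofReal_le_ofReal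
          simp only [hT, mem_setOf_eq] at hw
          have h1 := (abs_lt.mp hw).1
          have h2 := (abs_lt.mp hw).2
          rw [hc2def]
          exact weight_bound hy (by rw [hrdef] at h1; linarith) (by rw [hrdef] at h2; linarith)
      _ ≤ ∫⁻ w in U, ENNReal.ofReal (c2 * w.im^(ν-1)) * G w := lintegral_mono_set hTsubU
      _ = ∫⁻ w in U, ENNReal.ofReal c2 * ENNReal.ofReal (‖f w‖ * w.im^(ν-1)) := by
          apply setLIntegral_congr_fun hU.measurableSet
          intro w hw
          rw [hG]
          show ENNReal.ofReal (c2 * w.im^(ν-1)) * U.indicator (fun w => ENNReal.ofReal ‖f w‖) w = _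
          beta_reduce
          rw [Set.indicator_of_mem hw, ENNReal.ofReal_mul hc2.le,
            ENNReal.ofReal_mul (norm_nonneg _)]
          ring
  have hAnn : (0 : ℂ → ℝ) ≤ᵐ[volume.restrict U] fun w : ℂ => ‖f w‖ * w.im ^ (ν-1) := by
    rw [Filter.EventuallyLE, ae_restrict_iff' hU.measurableSet]
    apply ae_of_all
    intro w hw
    have : 0 < w.im := hw
    positivity
  have hA : ENNReal.ofReal (∫ w in U, ‖f w‖ * w.im ^ (ν-1))
      = ∫⁻ w in U, ENNReal.ofReal (‖f w‖ * w.im^(ν-1)) :=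
    ofReal_integral_eq_lintegral_ofReal hint hAnn
  set A : ℝ := ∫ w in U, ‖f w‖ * w.im ^ (ν-1) with hAdef
  have hA0 : 0 ≤ A := by
    apply setIntegral_nonneg hU.measurableSet
    intro w hw
    have : 0 < w.im := hw
    positivity
  have hfinal : ENNReal.ofReal (y^(ν-1)) * (ENNReal.ofReal (Real.pi * r^2) * M)
      ≤ ENNReal.ofReal (2*r) * (ENNReal.ofReal c2 * ENNReal.ofReal A) := by
    calc ENNReal.ofReal (y^(ν-1)) * (ENNReal.ofReal (Real.pi * r^2) * M)
        ≤ ENNReal.ofReal (y^(ν-1)) * (ENNReal.ofReal (2*r) * ∫⁻ w in T, G w) :=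
          mul_le_mul_right (hM1.trans (le_of_le_of_eq (le_of_eq hswap) rfl |>.trans hM2)) _
      _ = ENNReal.ofReal (2*r) * (ENNReal.ofReal (y^(ν-1)) * ∫⁻ w in T, G w) := by ring
      _ ≤ ENNReal.ofReal (2*r) * (ENNReal.ofReal c2
            * ∫⁻ w in U, ENNReal.ofReal (‖f w‖ * w.im^(ν-1))) := mul_le_mul_right hweight _
      _ = ENNReal.ofReal (2*r) * (ENNReal.ofReal c2 * ENNReal.ofReal A) := by rw [hA]
  -- M is finite
  have hyν1 : 0 < y ^ (ν-1) := Real.rpow_pos_of_pos hy _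
  have hMne : M ≠ ⊤ := by
    intro hMtop
    rw [hMtop] at hfinal
    have h1 : ENNReal.ofReal (y^(ν-1)) * (ENNReal.ofReal (Real.pi * r^2) * ⊤) = ⊤ := by
      rw [ENNReal.mul_top (ENNReal.ofReal_pos.mpr
          (by positivity : (0:ℝ) < Real.pi * r^2)).ne',
        ENNReal.mul_top (ENNReal.ofReal_pos.mpr hyν1).ne']
    rw [h1] at hfinal
    exact (lt_of_le_of_lt hfinal (by
      apply ENNReal.mul_lt_top ENNReal.ofReal_lt_top
      exact ENNReal.mul_lt_top ENNReal.ofReal_lt_top ENNReal.ofReal_lt_top)).ne rfl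
  -- Bochner integral = toReal of M
  have hcontx : Continuous fun x : ℝ => f ((x:ℂ) + y*I) := by
    apply hfc.comp_continuous (by fun_prop)
    intro x
    show 0 < ((x:ℂ) + y*I).im
    simp [hy]
  have hMr : (∫ x : ℝ, ‖f ((x:ℂ)+y*I)‖) = M.toReal := by
    rw [hMdef, integral_eq_lintegral_of_nonneg_ae (ae_of_all _ fun x => norm_nonneg _)
      hcontx.norm.aestronglyMeasurable]
  -- convert hfinal to reals
  have hRne : ENNReal.ofReal (2*r) * (ENNReal.ofReal c2 * ENNReal.ofReal A) ≠ ⊤ := by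
    apply (ENNReal.mul_lt_top ENNReal.ofReal_lt_top
      (ENNReal.mul_lt_top ENNReal.ofReal_lt_top ENNReal.ofReal_lt_top)).ne
  have hreal : y^(ν-1) * (Real.pi * r^2 * M.toReal) ≤ (2*r) * (c2 * A) := by
    have h := ENNReal.toReal_mono hRne hfinal
    rw [ENNReal.toReal_mul, ENNReal.toReal_mul, ENNReal.toReal_mul, ENNReal.toReal_mul,
      ENNReal.toReal_ofReal hyν1.le, ENNReal.toReal_ofReal (by positivity),
      ENNReal.toReal_ofReal (by positivity), ENNReal.toReal_ofReal hc2.le,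
      ENNReal.toReal_ofReal hA0] at h
    linarith [h]
  rw [hMr]
  -- final algebra
  have hyν : y ^ ν = y^(ν-1) * y := by
    rw [← Real.rpow_add_one hy.ne' (ν-1)]
    norm_num
  rw [hyν, hrdef] at *
  rw [div_mul_eq_mul_div, le_div_iff₀ Real.pi_pos]
  have hMt0 : 0 ≤ M.toReal := ENNReal.toReal_nonneg
  nlinarith [hreal, Real.pi_pos, mul_pos hyν1 hy, hyν1, hy]
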